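/- Let σ be a partition of the set of all primes and G a non-trivial finite σ-soluble group. Then for every σ_i ∈ σ with σ_i ∩ π(G) ≠ ∅, G has a maximal subgroup M such that |G:M| is a σ_i-number, i.e. every prime dividing |G:M| lies in σ_i. -/

import Mathlib

open Subgroup Pointwise

/-- `σ` is a partition of the set of all primes: every member of every block is prime,
and every prime lies in exactly one block. -/
def IsPrimePartition {ι : Type*} (σ : ι → Set ℕ) : Prop :=
  (∀ i, ∀ p ∈ σ i, Nat.Prime p) ∧ ∀ p : ℕ, Nat.Prime p → ∃! i, p ∈ σ i

/-- `σ(m)`: the set of indices `i` such that `σ i` contains a prime divisor of `m`. -/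
def sigmaClasses {ι : Type*} (σ : ι → Set ℕ) (m : ℕ) : Set ι :=
  {i | ∃ p ∈ σ i, Nat.Prime p ∧ p ∣ m}

/-- A group of order `m` is `σ`-primary iff `m = 1` or `|σ(m)| = 1`. -/
def IsSigmaPrimary {ι : Type*} (σ : ι → Set ℕ) (m : ℕ) : Prop :=
  m = 1 ∨ (sigmaClasses σ m).ncard = 1

/-- `m` is a `Π`-number: every prime divisor of `m` lies in some block belonging to `Π`. -/
def IsPiNumber {ι : Type*} (σ : ι → Set ℕ) (Pi : Set ι) (m : ℕ) : Prop :=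
  ∀ p : ℕ, Nat.Prime p → p ∣ m → ∃ i ∈ Pi, p ∈ σ i

/-- `H` is a Hall `Π`-subgroup of `G`: `|H|` is a `Π`-number and `|G : H|` is a `Π'`-number. -/
def IsHallPiSubgroup {ι : Type*} (σ : ι → Set ℕ) (Pi : Set ι) {G : Type*} [Group G]
    (H : Subgroup G) : Prop :=
  IsPiNumber σ Pi (Nat.card H) ∧ IsPiNumber σ Piᶜ H.index

/-- `A` is `σ`-subnormal in `G`. -/
def IsSigmaSubnormal {ι : Type*} (σ : ι → Set ℕ) {G : Type*} [Group G] (A : Subgroup G) : Prop :=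
  ∃ (t : ℕ) (c : Fin (t + 1) → Subgroup G), Monotone c ∧ c 0 = A ∧ c (Fin.last t) = ⊤ ∧
    ∀ i : Fin t, ((c i.castSucc).subgroupOf (c i.succ)).Normal ∨
      IsSigmaPrimary σ
        (Nat.card (↥(c i.succ) ⧸ ((c i.castSucc).subgroupOf (c i.succ)).normalCore))

/-- `M/N` is a chief factor of `G`. -/
def IsChiefFactor {G : Type*} [Group G] (N M : Subgroup G) : Prop :=
  N.Normal ∧ M.Normal ∧ N < M ∧
    ∀ K : Subgroup G, K.Normal → N ≤ K → K ≤ M → K = N ∨ K = M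

/-- `G` is `σ`-soluble: every chief factor of `G` is `σ`-primary. -/
def IsSigmaSoluble {ι : Type*} (σ : ι → Set ℕ) (G : Type*) [Group G] : Prop :=
  ∀ N M : Subgroup G, IsChiefFactor N M →
    IsSigmaPrimary σ (Nat.card (↥M ⧸ N.subgroupOf M))

/-- `A` is an `n`-maximal subgroup of `G`. -/
def IsNMaximal {G : Type*} [Group G] (n : ℕ) (A : Subgroup G) : Prop :=
  ∃ c : Fin (n + 1) → Subgroup G, Monotone c ∧ c 0 = A ∧ c (Fin.last n) = ⊤ ∧
    ∀ i : Fin n, IsCoatom ((c i.castSucc).subgroupOf (c i.succ))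

/-- `A` is subnormal in `G`. -/
def IsSubnormalSubgroup {G : Type*} [Group G] (A : Subgroup G) : Prop :=
  ∃ (t : ℕ) (c : Fin (t + 1) → Subgroup G), Monotone c ∧ c 0 = A ∧ c (Fin.last t) = ⊤ ∧
    ∀ i : Fin t, ((c i.castSucc).subgroupOf (c i.succ)).Normal

/-- `S` is a complete Hall `σ`-set of `G`. -/
def IsCompleteHallSigmaSet {ι : Type*} (σ : ι → Set ℕ) {G : Type*} [Group G]
    (S : Set (Subgroup G)) : Prop :=
  (∀ H ∈ S, H ≠ ⊥ → ∃ i ∈ sigmaClasses σ (Nat.card G), IsHallPiSubgroup σ {i} H) ∧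
  ∀ i ∈ sigmaClasses σ (Nat.card G), ∃! H, H ∈ S ∧ IsHallPiSubgroup σ {i} H

/-- `G` is `σ`-dispersive. -/
def IsSigmaDispersive {ι : Type*} (σ : ι → Set ℕ) (G : Type*) [Group G] : Prop :=
  ∃ (t : ℕ) (c : Fin (t + 1) → Subgroup G) (H : Fin t → Subgroup G),
    StrictMono c ∧ c 0 = ⊥ ∧ c (Fin.last t) = ⊤ ∧ (∀ i, (c i).Normal) ∧
    IsCompleteHallSigmaSet σ (Set.range H) ∧
    ∀ i : Fin t, (c i.castSucc : Set G) * (H i : Set G) = (c i.succ : Set G)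


section AuxProof

universe u
variable {ι : Type*} {σ : ι → Set ℕ}

private lemma quotSoluble {G : Type u} [Group G] (N : Subgroup G) [N.Normal]
    (h : IsSigmaSoluble σ G) : IsSigmaSoluble σ (G ⧸ N) := by
  intro A B hAB
  obtain ⟨hA, hB, hlt, hmax⟩ := hAB
  haveI := hA
  set f := QuotientGroup.mk' N with hfdef
  have hfs : Function.Surjective f := QuotientGroup.mk'_surjective N
  set K := A.comap f with hK
  set L := B.comap f with hL
  have hKL : K ≤ L := Subgroup.comap_mono hlt.le
  have hker : f.ker = N := QuotientGroup.ker_mk' N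
  have hNK : N ≤ K := by rw [← hker]; exact Subgroup.ker_le_comap f A
  have hchief : IsChiefFactor K L := by
    refine ⟨hA.comap f, hB.comap f, lt_of_le_of_ne hKL ?_, ?_⟩
    · intro h; exact hlt.ne (Subgroup.comap_injective hfs h)
    · intro J hJ hKJ hJL
      have hkerJ : f.ker ≤ J := by rw [hker]; exact hNK.trans hKJ
      have hmap : (J.map f).Normal := hJ.map f hfs
      have hJback : (J.map f).comap f = J := Subgroup.comap_map_eq_self hkerJ
      have h1 : A ≤ J.map f := by
        rw [← Subgroup.map_comap_eq_self_of_surjective hfs A]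
        exact Subgroup.map_mono hKJ
      have h2 : J.map f ≤ B := Subgroup.map_le_iff_le_comap.mpr hJL
      rcases hmax (J.map f) hmap h1 h2 with h | h
      · left; rw [← hJback, h]
      · right; rw [← hJback, h]
  have hprim := h K L hchief
  suffices hcard : Nat.card (↥L ⧸ K.subgroupOf L) = Nat.card (↥B ⧸ A.subgroupOf B) by
    rwa [hcard] at hprim
  have hmem : ∀ x : L, (f x) ∈ B := fun x => x.2
  let φ : ↥L →* ↥B ⧸ A.subgroupOf B :=
    (QuotientGroup.mk' (A.subgroupOf B)).comp ((f.domRestrict L).codRestrict B hmem)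
  have hφs : Function.Surjective φ := by
    intro b
    induction b using QuotientGroup.induction_on with
    | _ y =>
      obtain ⟨x, hx⟩ := hfs y.1
      have hxL : x ∈ L := by rw [hL, Subgroup.mem_comap, hx]; exact y.2
      exact ⟨⟨x, hxL⟩, congrArg QuotientGroup.mk (Subtype.ext hx)⟩
  have hkerφ : φ.ker = K.subgroupOf L := by
    ext x
    simp [φ, MonoidHom.mem_ker, QuotientGroup.eq_one_iff, Subgroup.mem_subgroupOf,
      hK, Subgroup.mem_comap, MonoidHom.domRestrict_apply]
    exact Iff.rfl
  calc Nat.card (↥L ⧸ K.subgroupOf L) = Nat.card (↥L ⧸ φ.ker) := by rw [hkerφ]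
    _ = Nat.card (↥B ⧸ A.subgroupOf B) :=
        Nat.card_congr (QuotientGroup.quotientKerEquivOfSurjective φ hφs).toEquiv

private lemma coatom_comap {G : Type u} [Group G] (N : Subgroup G) [N.Normal]
    {M : Subgroup (G ⧸ N)} (h : IsCoatom M) :
    IsCoatom (M.comap (QuotientGroup.mk' N)) := by
  have hfs := QuotientGroup.mk'_surjective N
  constructor
  · intro htop
    apply h.1
    rw [← Subgroup.map_comap_eq_self_of_surjective hfs M, htop,
      Subgroup.map_top_of_surjective _ hfs]
  · intro K hK
    have hNK : (QuotientGroup.mk' N).ker ≤ K :=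
      (Subgroup.ker_le_comap (QuotientGroup.mk' N) M).trans hK.le
    have h1 : M ≤ K.map (QuotientGroup.mk' N) := by
      rw [← Subgroup.map_comap_eq_self_of_surjective hfs M]
      exact Subgroup.map_mono hK.le
    have h2 : M ≠ K.map (QuotientGroup.mk' N) := by
      intro he
      exact hK.ne' (by rw [← Subgroup.comap_map_eq_self hNK, ← he])
    have := h.2 _ (lt_of_le_of_ne h1 h2)
    rw [← Subgroup.comap_map_eq_self hNK, this, Subgroup.comap_top]

private lemma exists_minimal_normal (G : Type u) [Group G] [Finite G] [Nontrivial G] :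
    ∃ N : Subgroup G, IsChiefFactor ⊥ N := by
  have hwf : WellFounded ((· < ·) : Subgroup G → Subgroup G → Prop) := wellFounded_lt
  have htne : (⊤ : Subgroup G) ≠ ⊥ := by
    intro h
    obtain ⟨x, y, hxy⟩ := exists_pair_ne G
    apply hxy
    have hx : x ∈ (⊥ : Subgroup G) := h ▸ Subgroup.mem_top x
    have hy : y ∈ (⊥ : Subgroup G) := h ▸ Subgroup.mem_top y
    rw [Subgroup.mem_bot] at hx hy
    rw [hx, hy]
  obtain ⟨N, hN, hmin⟩ := hwf.has_min {N : Subgroup G | N.Normal ∧ N ≠ ⊥}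
    ⟨⊤, inferInstance, htne⟩
  refine ⟨N, inferInstance, hN.1, bot_lt_iff_ne_bot.mpr hN.2, fun K hK _ hKN => ?_⟩
  by_cases hKbot : K = ⊥
  · exact Or.inl hKbot
  · right
    rcases hKN.lt_or_eq with hlt | heq
    · exact absurd hlt (hmin K ⟨hK, hKbot⟩)
    · exact heq

private lemma aux_main {ι' : Type*} (σ' : ι' → Set ℕ) (hσ : IsPrimePartition σ') :
    ∀ (n : ℕ) (G : Type u) [Group G] [Finite G], Nat.card G = n → IsSigmaSoluble σ' G →
    ∀ i ∈ sigmaClasses σ' (Nat.card G),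
      ∃ M : Subgroup G, IsCoatom M ∧ IsPiNumber σ' {i} M.index := by
  intro n
  induction n using Nat.strong_induction_on with
  | _ n IH =>
  intro G _ _ hn hsol i hi
  obtain ⟨p, hpσ, hpp, hpd⟩ := hi
  have hGnt : Nontrivial G := by
    rw [← Finite.one_lt_card_iff_nontrivial]
    exact lt_of_lt_of_le hpp.one_lt (Nat.le_of_dvd Nat.card_pos hpd)
  obtain ⟨N, hchief⟩ := exists_minimal_normal G
  haveI hNnorm : N.Normal := hchief.2.1
  have hprim : IsSigmaPrimary σ' (Nat.card N) := by
    have h1 := hsol ⊥ N hchief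
    have e : Nat.card (↥N ⧸ (⊥ : Subgroup G).subgroupOf N) = Nat.card N := by
      rw [Subgroup.bot_subgroupOf]
      exact Nat.card_congr (QuotientGroup.quotientBot (G := ↥N)).toEquiv
    rwa [e] at h1
  have hNne : N ≠ ⊥ := hchief.2.2.1.ne'
  have hNcard : 1 < Nat.card N := by
    rw [Finite.one_lt_card_iff_nontrivial]
    exact (Subgroup.nontrivial_iff_ne_bot N).mpr hNne
  have hcardG : Nat.card G = Nat.card (G ⧸ N) * Nat.card N :=
    Subgroup.card_eq_card_quotient_mul_card_subgroup N
  by_cases hiq : i ∈ sigmaClasses σ' (Nat.card (G ⧸ N))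
  · -- induct on the quotient
    have hqpos : 0 < Nat.card (G ⧸ N) := Nat.card_pos
    have hlt : Nat.card (G ⧸ N) < n := by
      rw [← hn, hcardG]
      exact (lt_mul_iff_one_lt_right hqpos).mpr hNcard
    obtain ⟨Mbar, hMc, hMpi⟩ := IH _ hlt (G ⧸ N) rfl (quotSoluble N hsol) i hiq
    refine ⟨Mbar.comap (QuotientGroup.mk' N), coatom_comap N hMc, ?_⟩
    rwa [Mbar.index_comap_of_surjective (QuotientGroup.mk'_surjective N)]
  · -- N contains all σ_i-part; use Schur–Zassenhaus
    have hpN : p ∣ Nat.card N := by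
      rcases (Nat.Prime.dvd_mul hpp).mp (hcardG ▸ hpd) with h | h
      · exact absurd ⟨p, hpσ, hpp, h⟩ hiq
      · exact h
    have hiN : i ∈ sigmaClasses σ' (Nat.card N) := ⟨p, hpσ, hpp, hpN⟩
    have hNclass : sigmaClasses σ' (Nat.card N) = {i} := by
      rcases hprim with h1 | h1
      · omega
      · obtain ⟨j, hj⟩ := Set.ncard_eq_one.mp h1
        rw [hj] at hiN ⊢
        rw [Set.mem_singleton_iff] at hiN
        rw [hiN]
    have hmemN : ∀ q : ℕ, Nat.Prime q → q ∣ Nat.card N → q ∈ σ' i := by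
      intro q hq hqN
      obtain ⟨j, hjq, _⟩ := hσ.2 q hq
      have hjmem : j ∈ sigmaClasses σ' (Nat.card N) := ⟨q, hjq, hq, hqN⟩
      rw [hNclass, Set.mem_singleton_iff] at hjmem
      exact hjmem ▸ hjq
    have hcop : Nat.Coprime (Nat.card N) N.index := by
      by_contra hnc
      set d := Nat.gcd (Nat.card N) N.index with hd
      have hq : Nat.Prime d.minFac := Nat.minFac_prime hnc
      have h1 : d.minFac ∣ Nat.card N := (Nat.minFac_dvd d).trans (Nat.gcd_dvd_left _ _)
      have h2 : d.minFac ∣ N.index := (Nat.minFac_dvd d).trans (Nat.gcd_dvd_right _ _)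
      apply hiq
      refine ⟨d.minFac, hmemN _ hq h1, hq, ?_⟩
      rwa [← Subgroup.index_eq_card]
    obtain ⟨H, hH⟩ := Subgroup.exists_right_complement'_of_coprime hcop
    have hHidx : H.index = Nat.card N := hH.index_eq_card
    have hHne : H ≠ ⊤ := by
      intro h
      rw [h, Subgroup.index_top] at hHidx
      omega
    have hcoat : IsCoatomic (Subgroup G) :=
      isCoatomic_of_orderTop_gt_wellFounded wellFounded_gt
    rcases hcoat.eq_top_or_exists_le_coatom H with h | ⟨M, hM, hHM⟩
    · exact absurd h hHne
    refine ⟨M, hM, ?_⟩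
    have hdvd : M.index ∣ Nat.card N := hHidx ▸ Subgroup.index_dvd_of_le hHM
    intro q hq hqM
    exact ⟨i, rfl, hmemN q hq (hqM.trans hdvd)⟩

end AuxProof

/-- If `G` is a non-trivial finite `σ`-soluble group, then for every `σ_i` meeting `π(G)`,
`G` has a maximal subgroup `M` such that `|G : M|` is a `σ_i`-number. -/
theorem exists_maximal_index_sigma_number
    {ι : Type*} (σ : ι → Set ℕ) (hσ : IsPrimePartition σ)
    (G : Type*) [Group G] [Finite G] [Nontrivial G] (hsol : IsSigmaSoluble σ G) :
    ∀ i ∈ sigmaClasses σ (Nat.card G),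
      ∃ M : Subgroup G, IsCoatom M ∧ IsPiNumber σ {i} M.index := by
  exact aux_main σ hσ (Nat.card G) G rfl hsol
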